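/- Let B be a finitely semi-graded algebra over a field K, let ε : B → K be the augmentation map (the projection onto B_0 = K), and view K as a left and right B-module via ε. Suppose that K admits a resolution by free semi-graded B-modules with homogeneous differentials, and that dim_K Ext_B^n(K, K) < ∞ for every n ≥ 0 (as holds when the Yoneda algebra E(B) = ⊕_{n≥0} Ext_B^n(K,K) is finitely generated). Then for every n ≥ 0 there is an isomorphism of K-vector spaces Tor_n^B(K, K) ≅ Ext_B^n(K, K). -/

import Mathlib

noncomputable section

/-- A finitely semi-graded (FSG) algebra structure on a `K`-algebra `B`. -/
structure FSGAlgebra (K : Type*) [Field K] (B : Type*) [Ring B] [Algebra K B] where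
  gr : ℕ → Submodule K B
  internal : DirectSum.IsInternal gr
  mul_mem : ∀ m n : ℕ, ∀ a ∈ gr m, ∀ b ∈ gr n, a * b ∈ ⨆ i ∈ Finset.Iic (m + n), gr i
  mul_mem' : ∀ p q : ℕ, 1 ≤ p → 1 ≤ q → ∀ a ∈ gr p, ∀ b ∈ gr q,
      a * b ∈ ⨆ i ∈ Finset.Icc 1 (p + q), gr i
  grade_zero : gr 0 = (1 : Submodule K B)
  finiteDim : ∀ n, FiniteDimensional K (gr n)
  gen : Algebra.adjoin K (gr 1 : Set B) = ⊤

/-- `B_m` for `m ∈ ℤ` (zero in negative degrees); used for degree shifts. -/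
def FSGAlgebra.zgr {K B : Type*} [Field K] [Ring B] [Algebra K B]
    (S : FSGAlgebra K B) (m : ℤ) : Submodule K B :=
  if 0 ≤ m then S.gr m.toNat else ⊥

variable {K B : Type*} [Field K] [Ring B] [Algebra K B] {X : ℕ → Type*}

/-- The differential of the complex `Hom_B(B^{(X_•)}, K)`, where `Hom_B(B^{(X_i)}, K)`
is identified with `X_i → K`:  `(g : X_i → K) ↦ (x ↦ Σ_y ε((d_i eₓ)_y)·g(y))`. -/
def extD (ε : B →+* K) (d : ∀ i : ℕ, (X (i + 1) →₀ B) →ₗ[B] (X i →₀ B)) (i : ℕ) :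
    (X i → K) →ₗ[K] (X (i + 1) → K) :=
  LinearMap.pi fun x =>
    (d i (Finsupp.single x 1)).sum fun y c => ε c • LinearMap.proj y

/-- The coboundaries: image of the previous differential (`0` in degree `0`). -/
def extBdry (ε : B →+* K) (d : ∀ i : ℕ, (X (i + 1) →₀ B) →ₗ[B] (X i →₀ B)) :
    ∀ i : ℕ, Submodule K (X i → K)
  | 0 => ⊥
  | (i + 1) => LinearMap.range (extD ε d i)

/-- `Ext_B^i(K,K)` computed from the free resolution `(X_•, d)`:
the homology `ker(d_{i+1}^*)/im(d_i^*)`, realized as the image of the cocycles in the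
quotient by the coboundaries. -/
abbrev extSpace (ε : B →+* K) (d : ∀ i : ℕ, (X (i + 1) →₀ B) →ₗ[B] (X i →₀ B)) (i : ℕ) :
    Type _ :=
  ↥((LinearMap.ker (extD ε d i)).map (extBdry ε d i).mkQ)

/-- The differential of the complex `K ⊗_B B^{(X_•)}`, where `K ⊗_B B^{(X_i)}` is
identified with `X_i →₀ K`. -/
def torD (ε : B →+* K) (d : ∀ i : ℕ, (X (i + 1) →₀ B) →ₗ[B] (X i →₀ B)) (i : ℕ) :
    (X (i + 1) →₀ K) →ₗ[K] (X i →₀ K) :=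
  Finsupp.lsum K fun x =>
    LinearMap.toSpanSingleton K (X i →₀ K)
      (Finsupp.mapRange ε (map_zero ε) (d i (Finsupp.single x 1)))

/-- The cycles: kernel of the differential (everything in degree `0`). -/
def torCyc (ε : B →+* K) (d : ∀ i : ℕ, (X (i + 1) →₀ B) →ₗ[B] (X i →₀ B)) :
    ∀ i : ℕ, Submodule K (X i →₀ K)
  | 0 => ⊤
  | (i + 1) => LinearMap.ker (torD ε d i)

/-- `Tor_i^B(K,K)` computed from the free resolution `(X_•, d)`. -/
abbrev torSpace (ε : B →+* K) (d : ∀ i : ℕ, (X (i + 1) →₀ B) →ₗ[B] (X i →₀ B)) (i : ℕ) :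
    Type _ :=
  ↥((torCyc ε d i).map (LinearMap.range (torD ε d i)).mkQ)



noncomputable section
set_option maxHeartbeats 1000000

open LinearMap Submodule

/-- Cohomology of the dual complex is the dual of homology, over a field. -/
lemma dual_homology {K : Type*} [Field K] {V₀ V₁ V₂ : Type*}
    [AddCommGroup V₀] [AddCommGroup V₁] [AddCommGroup V₂]
    [Module K V₀] [Module K V₁] [Module K V₂]
    (f : V₁ →ₗ[K] V₀) (g : V₂ →ₗ[K] V₁) (hfg : ∀ x, f (g x) = 0) :
    Nonempty
      (((ker g.dualMap).map (range f.dualMap).mkQ) ≃ₗ[K]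
        Module.Dual K ((ker f).map (range g).mkQ)) := by
  classical
  set Kf := ker f
  set Rg := range g
  -- the homology as a quotient of the cycles
  set T : Kf →ₗ[K] (V₁ ⧸ Rg) := Rg.mkQ.comp Kf.subtype with hT
  have hH : Kf.map Rg.mkQ = range T := by
    rw [hT, range_comp, Submodule.range_subtype]
  set N : Submodule K (Module.Dual K V₁) := ker g.dualMap with hN
  set π : N →ₗ[K] (Module.Dual K V₁ ⧸ range f.dualMap) :=
    (range f.dualMap).mkQ.comp N.subtype with hπ
  have hH' : N.map (range f.dualMap).mkQ = range π := by
    rw [hπ, range_comp, Submodule.range_subtype]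
  -- a cocycle defines a functional on the homology
  have hvan : ∀ φ : N, ker T ≤ ker ((φ : Module.Dual K V₁).comp Kf.subtype) := by
    rintro ⟨φ, hφ⟩ x hx
    have hx' : (x : V₁) ∈ Rg := by
      simpa [hT, Submodule.Quotient.mk_eq_zero] using hx
    obtain ⟨z, hz⟩ := hx'
    have : g.dualMap φ = 0 := hφ
    have hz' : φ (g z) = 0 := by
      have := congrFun (congrArg (fun h : Module.Dual K V₂ => (h : V₂ → K)) this) z
      simpa [LinearMap.dualMap_apply] using this
    simpa [hz] using hz'
  set Ψ : N →ₗ[K] Module.Dual K (Kf ⧸ ker T) :=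
    { toFun := fun φ => (ker T).liftQ ((φ : Module.Dual K V₁).comp Kf.subtype) (hvan φ)
      map_add' := by
        intro a b
        apply Submodule.linearMap_qext
        simp only [Submodule.liftQ_mkQ, Submodule.coe_add, LinearMap.add_comp]
      map_smul' := by
        intro c a
        apply Submodule.linearMap_qext
        simp only [Submodule.liftQ_mkQ, Submodule.coe_smul, LinearMap.smul_comp,
          RingHom.id_apply] } with hΨ
  have hΨ_apply : ∀ (φ : N) (x : Kf), Ψ φ (Submodule.Quotient.mk x) = (φ : Module.Dual K V₁) x := by
    intro φ x
    rfl
  -- kernel of Ψ is the coboundaries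
  have hker : ker Ψ = ker π := by
    ext φ
    constructor
    · intro hφ
      -- φ vanishes on ker f, hence is in the image of f.dualMap
      have hφ' : ∀ x : Kf, (φ : Module.Dual K V₁) x = 0 := by
        intro x
        have := congrFun (congrArg (fun h : Module.Dual K (Kf ⧸ ker T) => (h : _ → K))
          (show Ψ φ = 0 from hφ)) (Submodule.Quotient.mk x)
        simpa [hΨ_apply] using this
      have hvan2 : Kf ≤ ker (φ : Module.Dual K V₁) := by
        intro x hx
        exact hφ' ⟨x, hx⟩
      set ψ₀ : (V₁ ⧸ Kf) →ₗ[K] K := Kf.liftQ (φ : Module.Dual K V₁) hvan2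
      set χ : range f →ₗ[K] K := ψ₀.comp f.quotKerEquivRange.symm.toLinearMap
      obtain ⟨ψ, hψ⟩ := LinearMap.exists_extend χ
      have hmem : (φ : Module.Dual K V₁) ∈ range f.dualMap := by
        refine ⟨ψ, ?_⟩
        ext x
        have h1 : f.quotKerEquivRange (Submodule.Quotient.mk x) = ⟨f x, mem_range_self f x⟩ :=
          Subtype.ext (f.quotKerEquivRange_apply_mk x)
        have h2 : f.quotKerEquivRange.symm ⟨f x, mem_range_self f x⟩ =
            Submodule.Quotient.mk x := by
          rw [← h1, LinearEquiv.symm_apply_apply]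
        have h3 : ψ (f x) = χ ⟨f x, mem_range_self f x⟩ := by
          have := congrFun (congrArg (fun h : (range f : Submodule K V₀) →ₗ[K] K => (h : _ → K))
            hψ) ⟨f x, mem_range_self f x⟩
          simpa using this
        simp only [LinearMap.dualMap_apply]
        rw [h3]
        simp [χ, h2, ψ₀, Submodule.liftQ_apply]
      simp only [mem_ker, hπ, LinearMap.comp_apply, Submodule.mkQ_apply,
        Submodule.Quotient.mk_eq_zero]
      exact hmem
    · rintro hφ
      obtain ⟨ψ, hψ⟩ : (φ : Module.Dual K V₁) ∈ range f.dualMap := by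
        simpa [hπ, Submodule.Quotient.mk_eq_zero] using hφ
      simp only [mem_ker]
      apply Submodule.linearMap_qext
      ext x
      have : (φ : Module.Dual K V₁) (x : V₁) = ψ (f x) := by
        rw [← hψ]; rfl
      have hx0 : f (x : V₁) = 0 := x.2
      simp [hΨ_apply, this, hx0]
  -- Ψ is surjective
  have hsur : Function.Surjective Ψ := by
    intro χ
    obtain ⟨φ, hφ⟩ := LinearMap.exists_extend (χ.comp (ker T).mkQ)
    have hφ' : ∀ x : Kf, φ x = χ (Submodule.Quotient.mk x) := by
      intro x
      have := congrFun (congrArg (fun h : Kf →ₗ[K] K => (h : _ → K)) hφ) x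
      simpa using this
    have hφN : φ ∈ N := by
      simp only [hN, mem_ker]
      ext z
      have hmem : g z ∈ Kf := by simp [Kf, hfg z]
      have h0 : (⟨g z, hmem⟩ : Kf) ∈ ker T := by
        simp [hT, Submodule.Quotient.mk_eq_zero, Rg]
      have : φ (g z) = χ (Submodule.Quotient.mk ⟨g z, hmem⟩) := hφ' ⟨g z, hmem⟩
      rw [LinearMap.dualMap_apply] at *
      simp only [LinearMap.zero_apply]
      rw [this, (Submodule.Quotient.mk_eq_zero _).2 h0, map_zero]
    refine ⟨⟨φ, hφN⟩, ?_⟩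
    apply Submodule.linearMap_qext
    ext x
    simp [hΨ_apply, hφ' x]
  -- assemble
  set eQH : (Kf ⧸ ker T) ≃ₗ[K] (Kf.map Rg.mkQ : Submodule K (V₁ ⧸ Rg)) :=
    T.quotKerEquivRange.trans (LinearEquiv.ofEq _ _ hH.symm)
  exact ⟨(LinearEquiv.ofEq _ _ hH').trans <|
    (@LinearMap.quotKerEquivRange K N _ _ _ _ _ _ π).symm.trans <|
    (@Submodule.quotEquivOfEq K N _ _ _ _ _ hker.symm).trans <|
    (@LinearMap.quotKerEquivOfSurjective K N _ _ _ _ _ _ Ψ hsur).trans eQH.symm.dualMap⟩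

end

noncomputable section
/-- Transport of a `map mkQ` subquotient along a linear equivalence. -/
lemma map_mkQ_equiv {K M M' : Type*} [Field K] [AddCommGroup M] [AddCommGroup M']
    [Module K M] [Module K M'] (e : M ≃ₗ[K] M') (S q : Submodule K M)
    (S' q' : Submodule K M') (hS : S.map (e : M →ₗ[K] M') = S') (hq : q.map (e : M →ₗ[K] M') = q') :
    Nonempty ((S.map q.mkQ) ≃ₗ[K] (S'.map q'.mkQ)) := by
  subst hS hq
  set E := Submodule.Quotient.equiv q (q.map (e : M →ₗ[K] M')) e rfl
  have hcomm : (E : (M ⧸ q) →ₗ[K] (M' ⧸ q.map (e : M →ₗ[K] M'))).comp q.mkQ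
      = (q.map (e : M →ₗ[K] M')).mkQ.comp (e : M →ₗ[K] M') := by
    apply LinearMap.ext
    intro x
    simp [E, Submodule.Quotient.equiv, Submodule.mapQ_apply]
  have heq : (S.map q.mkQ).map (E : (M ⧸ q) →ₗ[K] _)
      = (S.map (e : M →ₗ[K] M')).map (q.map (e : M →ₗ[K] M')).mkQ := by
    rw [← Submodule.map_comp, hcomm, Submodule.map_comp]
  exact ⟨(E.submoduleMap (S.map q.mkQ)).trans (LinearEquiv.ofEq _ _ heq)⟩
end

section CommLemmas

variable {K B : Type*} [Field K] [Ring B] [Algebra K B] {X : ℕ → Type*}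

lemma llift_comm (ε : B →+* K) (d : ∀ i : ℕ, (X (i + 1) →₀ B) →ₗ[B] (X i →₀ B)) (i : ℕ)
    (g : X i → K) :
    (Finsupp.llift K K K (X (i+1))) (extD ε d i g)
      = (torD ε d i).dualMap ((Finsupp.llift K K K (X i)) g) := by
  apply Finsupp.lhom_ext
  intro a b
  simp only [Finsupp.llift_apply, Finsupp.lift_apply, LinearMap.dualMap_apply,
    torD, Finsupp.lsum_single, LinearMap.toSpanSingleton_apply, extD, LinearMap.pi_apply]
  rw [Finsupp.sum_single_index (by simp), Finsupp.sum_smul_index' (by simp),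
    Finsupp.sum_mapRange_index (by simp), LinearMap.finsupp_sum_apply, Finsupp.smul_sum]
  refine Finsupp.sum_congr fun y _ => ?_
  simp [mul_smul, smul_eq_mul, mul_assoc]

set_option linter.unusedSectionVars false

lemma torD_mapRange (ε : B →+* K) (d : ∀ i : ℕ, (X (i + 1) →₀ B) →ₗ[B] (X i →₀ B)) (i : ℕ)
    (v : X (i+1) →₀ B) :
    torD ε d i (v.mapRange ε (map_zero ε)) = (d i v).mapRange ε (map_zero ε) := by
  induction v using Finsupp.induction_linear with
  | zero => simp
  | add f g hf hg =>
      rw [Finsupp.mapRange_add (map_add ε), map_add, hf, hg, map_add,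
        Finsupp.mapRange_add (map_add ε)]
  | single x c =>
      rw [Finsupp.mapRange_single]
      have h1 : (Finsupp.single x c : X (i+1) →₀ B) = c • Finsupp.single x 1 := by
        rw [Finsupp.smul_single, smul_eq_mul, mul_one]
      have h2 : ∀ w : X i →₀ B, (c • w).mapRange ε (map_zero ε)
          = ε c • w.mapRange ε (map_zero ε) := by
        intro w; ext y
        simp [Finsupp.mapRange_apply, smul_eq_mul, map_mul]
      rw [h1, map_smul, h2]
      simp only [torD, Finsupp.lsum_single, LinearMap.toSpanSingleton_apply]

lemma torD_comp (ε : B →+* K) (d : ∀ i : ℕ, (X (i + 1) →₀ B) →ₗ[B] (X i →₀ B))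
    (hex : ∀ i : ℕ, Function.Exact ⇑(d (i + 1)) ⇑(d i)) (i : ℕ) (u : X (i+2) →₀ K) :
    torD ε d i (torD ε d (i+1) u) = 0 := by
  induction u using Finsupp.induction_linear with
  | zero => simp
  | add f g hf hg => rw [map_add, map_add, hf, hg, add_zero]
  | single x c =>
      have h1 : torD ε d (i+1) (Finsupp.single x c)
          = c • (d (i+1) (Finsupp.single x 1)).mapRange ε (map_zero ε) := by
        simp only [torD, Finsupp.lsum_single, LinearMap.toSpanSingleton_apply]
      rw [h1, map_smul, torD_mapRange]
      have h2 : d i (d (i+1) (Finsupp.single x 1)) = 0 :=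
        (hex i).apply_apply_eq_zero _
      rw [h2]
      simp

lemma ker_map_llift (ε : B →+* K) (d : ∀ i : ℕ, (X (i + 1) →₀ B) →ₗ[B] (X i →₀ B)) (i : ℕ) :
    (LinearMap.ker (extD ε d i)).map (Finsupp.llift K K K (X i) : (X i → K) ≃ₗ[K] _).toLinearMap
      = LinearMap.ker (torD ε d i).dualMap := by
  ext φ
  simp only [Submodule.mem_map, LinearMap.mem_ker]
  constructor
  · rintro ⟨g, hg, rfl⟩
    have := llift_comm ε d i g
    rw [hg, map_zero] at this
    exact this.symm
  · intro h
    set e := (Finsupp.llift K K K (X i) : (X i → K) ≃ₗ[K] Module.Dual K (X i →₀ K))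
    refine ⟨e.symm φ, ?_, e.apply_symm_apply φ⟩
    have := llift_comm ε d i (e.symm φ)
    rw [LinearEquiv.apply_symm_apply, h] at this
    exact (Finsupp.llift K K K (X (i+1)) :
      (X (i+1) → K) ≃ₗ[K] Module.Dual K (X (i+1) →₀ K)).injective (by simpa using this)

lemma range_map_llift (ε : B →+* K) (d : ∀ i : ℕ, (X (i + 1) →₀ B) →ₗ[B] (X i →₀ B)) (i : ℕ) :
    (LinearMap.range (extD ε d i)).map
        (Finsupp.llift K K K (X (i+1)) : (X (i+1) → K) ≃ₗ[K] _).toLinearMap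
      = LinearMap.range (torD ε d i).dualMap := by
  ext φ
  simp only [Submodule.mem_map, LinearMap.mem_range]
  constructor
  · rintro ⟨g, ⟨h, rfl⟩, rfl⟩
    exact ⟨Finsupp.llift K K K (X i) h, (llift_comm ε d i h).symm⟩
  · rintro ⟨ψ, rfl⟩
    set e := (Finsupp.llift K K K (X i) : (X i → K) ≃ₗ[K] Module.Dual K (X i →₀ K))
    refine ⟨extD ε d i (e.symm ψ), ⟨e.symm ψ, rfl⟩, ?_⟩
    rw [LinearEquiv.coe_coe, llift_comm ε d i (e.symm ψ), LinearEquiv.apply_symm_apply]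

set_option maxHeartbeats 1000000

/-- The main per-degree reduction. -/
lemma aux_main (ε : B →+* K) (d : ∀ i : ℕ, (X (i + 1) →₀ B) →ₗ[B] (X i →₀ B)) (i : ℕ)
    {V₀ : Type*} [AddCommGroup V₀] [Module K V₀]
    (f : (X i →₀ K) →ₗ[K] V₀)
    (hcyc : torCyc ε d i = LinearMap.ker f)
    (hbdry : (extBdry ε d i).map (Finsupp.llift K K K (X i) : (X i → K) ≃ₗ[K] _).toLinearMap
      = LinearMap.range f.dualMap)
    (hfg : ∀ x, f (torD ε d i x) = 0)
    (hfd : FiniteDimensional K (extSpace ε d i)) :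
    Nonempty (torSpace ε d i ≃ₗ[K] extSpace ε d i) := by
  classical
  set g := torD ε d i
  -- extSpace ≅ dual-complex cohomology
  obtain ⟨e1⟩ := map_mkQ_equiv
    (Finsupp.llift K K K (X i) : (X i → K) ≃ₗ[K] Module.Dual K (X i →₀ K))
    (LinearMap.ker (extD ε d i)) (extBdry ε d i)
    (LinearMap.ker g.dualMap) (LinearMap.range f.dualMap)
    (ker_map_llift ε d i) hbdry
  -- cohomology ≅ dual of homology
  obtain ⟨e2⟩ := dual_homology f g hfg
  -- torSpace = homology
  have hts : (torCyc ε d i).map (LinearMap.range g).mkQ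
      = (LinearMap.ker f).map (LinearMap.range g).mkQ := by rw [hcyc]
  have e3 : torSpace ε d i ≃ₗ[K] ((LinearMap.ker f).map (LinearMap.range g).mkQ : Submodule K _)
    := LinearEquiv.ofEq _ _ hts
  have E : extSpace ε d i ≃ₗ[K] Module.Dual K (torSpace ε d i) :=
    (e1.trans e2).trans e3.dualMap
  have hfd2 : FiniteDimensional K (Module.Dual K (torSpace ε d i)) := by
    exact Module.Finite.equiv E
  haveI : Module.Free K (torSpace ε d i) := Module.Free.of_divisionRing K _
  have hfd3 : FiniteDimensional K (torSpace ε d i) :=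
    (Module.finite_dual_iff K).1 hfd2
  exact ⟨((Module.finBasis K (torSpace ε d i)).toDualEquiv).trans E.symm⟩

end CommLemmas

/-- Theorem: let `B` be an FSG algebra with augmentation `ε : B → K`, and suppose `K`
admits a resolution `⋯ → B^{(X_1)} → B^{(X_0)} → K → 0` by free semi-graded `B`-modules
with homogeneous differentials, and that `dim_K Ext_B^i(K,K) < ∞` for all `i`.  Then
`Tor_i^B(K,K) ≅ Ext_B^i(K,K)` as `K`-vector spaces for every `i ≥ 0`. -/
theorem stmt13 (S : FSGAlgebra K B) (ε : B →+* K)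
    -- ε is the augmentation: it restricts to the iso B₀ ≅ K and kills B_n, n ≥ 1
    (hεa : ∀ l : K, ε (algebraMap K B l) = l)
    (hεg : ∀ n : ℕ, 1 ≤ n → ∀ x ∈ S.gr n, ε x = 0)
    -- a resolution of K by free left B-modules B^{(X_i)}
    (d : ∀ i : ℕ, (X (i + 1) →₀ B) →ₗ[B] (X i →₀ B))
    (e : (X 0 →₀ B) →+ K)
    (he : ∀ (c : B) (v : X 0 →₀ B), e (c • v) = ε c * e v)
    (hsurj : Function.Surjective e)
    (hex0 : Function.Exact ⇑(d 0) ⇑e)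
    (hex : ∀ i : ℕ, Function.Exact ⇑(d (i + 1)) ⇑(d i))
    -- the resolution is semi-graded (free on homogeneous generators of degrees w) with
    -- homogeneous differentials
    (w : ∀ i : ℕ, X i → ℤ)
    (hdhom : ∀ (i : ℕ) (ν : ℤ) (c : X (i + 1) →₀ B),
      (∀ x, c x ∈ S.zgr (ν - w (i + 1) x)) → ∀ y, d i c y ∈ S.zgr (ν - w i y))
    (hehom : ∀ (ν : ℤ) (c : X 0 →₀ B),
      (∀ x, c x ∈ S.zgr (ν - w 0 x)) → ν ≠ 0 → e c = 0)
    -- dim_K Ext^i < ∞ (as holds when the Yoneda algebra is finitely generated)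
    (hfd : ∀ i : ℕ, FiniteDimensional K (extSpace ε d i)) :
    ∀ i : ℕ, Nonempty (torSpace ε d i ≃ₗ[K] extSpace ε d i) := by
  intro i
  cases i with
  | zero =>
      refine aux_main ε d 0 (0 : (X 0 →₀ K) →ₗ[K] PUnit) ?_ ?_ (by simp) (hfd 0)
      · rw [LinearMap.ker_zero]
        rfl
      · have h0 : ((0 : (X 0 →₀ K) →ₗ[K] PUnit)).dualMap = 0 := by
          ext ψ x
          show ψ 0 = 0
          exact map_zero ψ
        rw [h0, LinearMap.range_zero]
        show Submodule.map _ (⊥ : Submodule K (X 0 → K)) = ⊥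
        rw [Submodule.map_bot]
  | succ i =>
      exact aux_main ε d (i+1) (torD ε d i) rfl (range_map_llift ε d i)
        (torD_comp ε d hex i) (hfd (i+1))

end
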